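/- If f, g ∈ z + (1/z)ℂ[[1/z]] are formal Laurent series (in the field ℂ((1/z))) satisfying f ∘ g = z, and f is algebraic over ℂ(z), then g is also algebraic over ℂ(z). -/

import Mathlib

/-- `z ∈ ℂ((1/z))`, modeled as the Laurent series field `LaurentSeries ℂ = HahnSeries ℤ ℂ`
in the variable `T = 1/z`; thus `z = T⁻¹ = single (-1) 1`. -/
noncomputable def zL : LaurentSeries ℂ := HahnSeries.single (-1) 1

/-- `f ∈ ℂ((1/z))` is algebraic over `ℂ(z)` if `P(z, f) = 0` for some nonzero
`P ∈ ℂ[x,y]`. -/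
def IsAlgL (f : LaurentSeries ℂ) : Prop :=
  ∃ P : MvPolynomial (Fin 2) ℂ, P ≠ 0 ∧ MvPolynomial.aeval ![zL, f] P = 0

/-- Composition `f ∘ g` of Laurent series (substitution `z ↦ g`): writing
`f = Σₙ f.coeff n · Tⁿ` with `T = 1/z`, we have `f ∘ g = Σₙ f.coeff n · (g⁻¹)ⁿ`.
When `g` has valuation `1` (i.e. `g ∈ z + ℂ[[1/z]]`), `(g⁻¹)ⁿ` has `T`-order `n`, so
the coefficient of `Tᵐ` in the sum is the finite sum over `-1 ≤ n ≤ m`; this is taken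
as the definition (it agrees with the usual composition for
`f, g ∈ z + (1/z)ℂ[[1/z]]`). -/
noncomputable def compL (f g : LaurentSeries ℂ) : LaurentSeries ℂ where
  coeff m := ∑ n ∈ Finset.Icc (-1 : ℤ) m, f.coeff n * ((g⁻¹) ^ n).coeff m
  isPWO_support' := by
    refine Set.IsPWO.mono (Set.IsWF.isPWO ((bddBelow_Ici (a := (-1 : ℤ))).wellFoundedOn_lt)) ?_
    intro m hm
    rw [Set.mem_Ici]
    by_contra h
    push_neg at h
    apply hm
    simp only []
    rw [Finset.Icc_eq_empty (by omega), Finset.sum_empty]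

namespace InverseCompAux

open Finset

/-- Substitution of `g⁻¹` for `T` in `h`, summing from `h.order`. -/
noncomputable def Phi (g h : LaurentSeries ℂ) : LaurentSeries ℂ where
  coeff m := ∑ n ∈ Finset.Icc h.order m, h.coeff n * ((g⁻¹) ^ n).coeff m
  isPWO_support' := by
    refine Set.IsPWO.mono (Set.IsWF.isPWO ((bddBelow_Ici (a := h.order)).wellFoundedOn_lt)) ?_
    intro m hm
    rw [Set.mem_Ici]
    by_contra h
    push_neg at h
    apply hm
    simp only []
    rw [Finset.Icc_eq_empty (by omega), Finset.sum_empty]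

lemma Phi_coeff (g h : LaurentSeries ℂ) (b m : ℤ) (hb : ∀ n, n < b → h.coeff n = 0) :
    (Phi g h).coeff m = ∑ n ∈ Finset.Icc b m, h.coeff n * ((g⁻¹) ^ n).coeff m := by
  have h0 : (Phi g h).coeff m = ∑ n ∈ Finset.Icc h.order m, h.coeff n * ((g⁻¹) ^ n).coeff m := rfl
  rw [h0]
  have key : ∀ b1 b2 : ℤ, b1 ≤ b2 → (∀ n, n < b2 → h.coeff n = 0) →
      ∑ n ∈ Finset.Icc b1 m, h.coeff n * ((g⁻¹) ^ n).coeff m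
        = ∑ n ∈ Finset.Icc b2 m, h.coeff n * ((g⁻¹) ^ n).coeff m := by
    intro b1 b2 hle hvan
    symm
    apply Finset.sum_subset (Finset.Icc_subset_Icc hle le_rfl)
    intro n hn hn'
    simp only [Finset.mem_Icc, not_and, not_le] at hn hn'
    rw [hvan n (by omega), zero_mul]
  rcases le_total b h.order with hc | hc
  · exact (key b h.order hc (fun n hn => HahnSeries.coeff_eq_zero_of_lt_order hn)).symm
  · exact key h.order b hc hb

/-- Multiplication coefficient formula as a concrete interval sum. -/
lemma mul_coeff_Icc (x y : LaurentSeries ℂ) (b1 b2 m : ℤ)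
    (hx : ∀ n, n < b1 → x.coeff n = 0) (hy : ∀ n, n < b2 → y.coeff n = 0) :
    (x * y).coeff m = ∑ i ∈ Finset.Icc b1 (m - b2), x.coeff i * y.coeff (m - i) := by
  classical
  let emb : ℤ ↪ ℤ × ℤ := ⟨fun i => (i, m - i), fun a b hab => (Prod.ext_iff.mp hab).1⟩
  have hsub : Finset.antidiagonal x.isPWO_support y.isPWO_support m
      ⊆ (Finset.Icc b1 (m - b2)).map emb := by
    intro ij hij
    rw [Finset.mem_antidiagonal] at hij
    obtain ⟨hi, hj, hsum⟩ := hij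
    rw [Finset.mem_map]
    refine ⟨ij.1, ?_, ?_⟩
    · rw [Finset.mem_Icc]
      constructor
      · by_contra hlt
        exact hi (hx _ (by omega))
      · have h2 : ¬ ij.2 < b2 := fun hlt => hj (hy _ hlt)
        omega
    · show (ij.1, m - ij.1) = ij
      have h2 : ij.2 = m - ij.1 := by omega
      exact Prod.ext rfl h2.symm
  have hzero : ∀ ij ∈ (Finset.Icc b1 (m - b2)).map emb,
      ij ∉ Finset.antidiagonal x.isPWO_support y.isPWO_support m →
      x.coeff ij.1 * y.coeff ij.2 = 0 := by
    intro ij hij hij'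
    rw [Finset.mem_map] at hij
    obtain ⟨i, hi, rfl⟩ := hij
    by_cases h1 : x.coeff i = 0
    · show x.coeff i * y.coeff (m - i) = 0
      rw [h1, zero_mul]
    by_cases h2 : y.coeff (m - i) = 0
    · show x.coeff i * y.coeff (m - i) = 0
      rw [h2, mul_zero]
    exfalso
    apply hij'
    rw [Finset.mem_antidiagonal]
    exact ⟨h1, h2, by show i + (m - i) = m; omega⟩
  rw [HahnSeries.coeff_mul, Finset.sum_subset hsub hzero, Finset.sum_map]
  rfl

lemma Phi_add (g h1 h2 : LaurentSeries ℂ) : Phi g (h1 + h2) = Phi g h1 + Phi g h2 := by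
  ext m
  set b := min h1.order h2.order with hb
  have l1 : ∀ n, n < b → h1.coeff n = 0 := fun n hn =>
    HahnSeries.coeff_eq_zero_of_lt_order (lt_of_lt_of_le hn (min_le_left _ _))
  have l2 : ∀ n, n < b → h2.coeff n = 0 := fun n hn =>
    HahnSeries.coeff_eq_zero_of_lt_order (lt_of_lt_of_le hn (min_le_right _ _))
  have l12 : ∀ n, n < b → (h1 + h2).coeff n = 0 := by
    intro n hn
    rw [HahnSeries.coeff_add, l1 n hn, l2 n hn, add_zero]
  rw [HahnSeries.coeff_add, Phi_coeff g _ b m l12, Phi_coeff g h1 b m l1,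
    Phi_coeff g h2 b m l2, ← Finset.sum_add_distrib]
  exact Finset.sum_congr rfl fun n _ => by rw [HahnSeries.coeff_add, add_mul]

lemma Phi_smul (g : LaurentSeries ℂ) (c : ℂ) (h : LaurentSeries ℂ) :
    Phi g (c • h) = c • Phi g h := by
  ext m
  have l : ∀ n, n < h.order → (c • h).coeff n = 0 := fun n hn => by
    rw [HahnSeries.coeff_smul, HahnSeries.coeff_eq_zero_of_lt_order hn, smul_zero]
  rw [HahnSeries.coeff_smul, Phi_coeff g (c • h) h.order m l,
    Phi_coeff g h h.order m (fun n hn => HahnSeries.coeff_eq_zero_of_lt_order hn),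
    Finset.smul_sum]
  refine Finset.sum_congr rfl fun n _ => ?_
  rw [HahnSeries.coeff_smul, smul_eq_mul, smul_eq_mul, mul_assoc]

lemma Phi_zero (g : LaurentSeries ℂ) : Phi g 0 = 0 := by
  ext m
  rw [Phi_coeff g 0 0 m (fun n _ => HahnSeries.coeff_zero)]
  simp

lemma Phi_one (g : LaurentSeries ℂ) : Phi g 1 = 1 := by
  ext m
  have hone : ∀ n : ℤ, n < 0 → (1 : LaurentSeries ℂ).coeff n = 0 := fun n hn => by
    rw [HahnSeries.coeff_one, if_neg (by omega)]
  rw [Phi_coeff g 1 0 m hone]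
  by_cases hm : 0 ≤ m
  · rw [Finset.sum_eq_single 0
      (fun n _ hne => by rw [HahnSeries.coeff_one, if_neg hne, zero_mul])
      (fun h => absurd (Finset.mem_Icc.mpr ⟨le_rfl, hm⟩) h)]
    rw [zpow_zero, HahnSeries.coeff_one, if_pos rfl, one_mul]
  · rw [Finset.Icc_eq_empty (by omega), Finset.sum_empty, HahnSeries.coeff_one,
      if_neg (by omega)]

lemma Phi_single0 (g : LaurentSeries ℂ) (c : ℂ) :
    Phi g (HahnSeries.single (0 : ℤ) c) = HahnSeries.single (0 : ℤ) c := by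
  ext m
  have hlow : ∀ n : ℤ, n < 0 → (HahnSeries.single (0 : ℤ) c).coeff n = 0 := fun n hn =>
    HahnSeries.coeff_single_of_ne (by omega)
  rw [Phi_coeff g _ 0 m hlow]
  by_cases hm : 0 ≤ m
  · rw [Finset.sum_eq_single 0
      (fun n _ hne => by rw [HahnSeries.coeff_single_of_ne hne, zero_mul])
      (fun h => absurd (Finset.mem_Icc.mpr ⟨le_rfl, hm⟩) h)]
    rw [HahnSeries.coeff_single_same, zpow_zero, HahnSeries.coeff_one, HahnSeries.coeff_single]
    by_cases h0 : m = 0 <;> simp [h0]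
  · rw [Finset.Icc_eq_empty (by omega), Finset.sum_empty,
      HahnSeries.coeff_single_of_ne (by omega)]

lemma Phi_mul (g : LaurentSeries ℂ) (hgne : g ≠ 0)
    (hL1 : ∀ n m : ℤ, m < n → ((g⁻¹) ^ n).coeff m = 0) (h1 h2 : LaurentSeries ℂ) :
    Phi g (h1 * h2) = Phi g h1 * Phi g h2 := by
  have hune : (g⁻¹ : LaurentSeries ℂ) ≠ 0 := inv_ne_zero hgne
  set b1 := h1.order with hb1def
  set b2 := h2.order with hb2def
  have hl1 : ∀ n, n < b1 → h1.coeff n = 0 := fun n hn =>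
    HahnSeries.coeff_eq_zero_of_lt_order hn
  have hl2 : ∀ n, n < b2 → h2.coeff n = 0 := fun n hn =>
    HahnSeries.coeff_eq_zero_of_lt_order hn
  have hl12 : ∀ n, n < b1 + b2 → (h1 * h2).coeff n = 0 := by
    intro n hn
    rw [mul_coeff_Icc h1 h2 b1 b2 n hl1 hl2, Finset.Icc_eq_empty (by omega), Finset.sum_empty]
  have hP1 : ∀ n, n < b1 → (Phi g h1).coeff n = 0 := by
    intro n hn
    rw [Phi_coeff g h1 b1 n hl1, Finset.Icc_eq_empty (by omega), Finset.sum_empty]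
  have hP2 : ∀ n, n < b2 → (Phi g h2).coeff n = 0 := by
    intro n hn
    rw [Phi_coeff g h2 b2 n hl2, Finset.Icc_eq_empty (by omega), Finset.sum_empty]
  ext m
  rw [Phi_coeff g (h1 * h2) (b1 + b2) m hl12]
  rw [mul_coeff_Icc (Phi g h1) (Phi g h2) b1 b2 m hP1 hP2]
  have hLHS : ∑ k ∈ Finset.Icc (b1 + b2) m, (h1 * h2).coeff k * ((g⁻¹) ^ k).coeff m
      = ∑ i ∈ Finset.Icc b1 (m - b2), ∑ j ∈ Finset.Icc b2 (m - b1),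
          h1.coeff i * h2.coeff j * ((g⁻¹) ^ (i + j)).coeff m := by
    calc ∑ k ∈ Finset.Icc (b1 + b2) m, (h1 * h2).coeff k * ((g⁻¹) ^ k).coeff m
        = ∑ k ∈ Finset.Icc (b1 + b2) m, ∑ i ∈ Finset.Icc b1 (m - b2),
            h1.coeff i * h2.coeff (k - i) * ((g⁻¹) ^ k).coeff m := by
          refine Finset.sum_congr rfl fun k hk => ?_
          rw [Finset.mem_Icc] at hk
          rw [mul_coeff_Icc h1 h2 b1 b2 k hl1 hl2, Finset.sum_mul]
          apply Finset.sum_subset (Finset.Icc_subset_Icc le_rfl (by omega))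
          intro i hi hi'
          simp only [Finset.mem_Icc, not_and, not_le] at hi hi'
          rw [hl2 (k - i) (by omega), mul_zero, zero_mul]
      _ = ∑ i ∈ Finset.Icc b1 (m - b2), ∑ k ∈ Finset.Icc (b1 + b2) m,
            h1.coeff i * h2.coeff (k - i) * ((g⁻¹) ^ k).coeff m := Finset.sum_comm
      _ = ∑ i ∈ Finset.Icc b1 (m - b2), ∑ j ∈ Finset.Icc b2 (m - b1),
            h1.coeff i * h2.coeff j * ((g⁻¹) ^ (i + j)).coeff m := by
          refine Finset.sum_congr rfl fun i hi => ?_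
          rw [Finset.mem_Icc] at hi
          have hmap : Finset.Icc (b1 + b2) m
              = (Finset.Icc (b1 + b2 - i) (m - i)).map (addLeftEmbedding i) := by
            rw [Finset.map_add_left_Icc]
            congr 1 <;> omega
          rw [hmap, Finset.sum_map]
          simp only [addLeftEmbedding_apply, add_sub_cancel_left]
          calc ∑ j ∈ Finset.Icc (b1 + b2 - i) (m - i),
                h1.coeff i * h2.coeff j * ((g⁻¹) ^ (i + j)).coeff m
              = ∑ j ∈ Finset.Icc b2 (m - i),
                h1.coeff i * h2.coeff j * ((g⁻¹) ^ (i + j)).coeff m := by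
                symm
                apply Finset.sum_subset (Finset.Icc_subset_Icc (by omega) le_rfl)
                intro j hj hj'
                simp only [Finset.mem_Icc, not_and, not_le] at hj hj'
                rw [hl2 j (by omega), mul_zero, zero_mul]
            _ = ∑ j ∈ Finset.Icc b2 (m - b1),
                h1.coeff i * h2.coeff j * ((g⁻¹) ^ (i + j)).coeff m := by
                apply Finset.sum_subset (Finset.Icc_subset_Icc le_rfl (by omega))
                intro j hj hj'
                simp only [Finset.mem_Icc, not_and, not_le] at hj hj'
                rw [hL1 (i + j) m (by omega), mul_zero]
  have hRHS : ∑ i ∈ Finset.Icc b1 (m - b2), (Phi g h1).coeff i * (Phi g h2).coeff (m - i)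
      = ∑ i ∈ Finset.Icc b1 (m - b2), ∑ j ∈ Finset.Icc b2 (m - b1),
          h1.coeff i * h2.coeff j * ((g⁻¹) ^ (i + j)).coeff m := by
    calc ∑ p ∈ Finset.Icc b1 (m - b2), (Phi g h1).coeff p * (Phi g h2).coeff (m - p)
        = ∑ p ∈ Finset.Icc b1 (m - b2),
            (∑ i ∈ Finset.Icc b1 (m - b2), h1.coeff i * ((g⁻¹) ^ i).coeff p) *
            (∑ j ∈ Finset.Icc b2 (m - b1), h2.coeff j * ((g⁻¹) ^ j).coeff (m - p)) := by
          refine Finset.sum_congr rfl fun p hp => ?_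
          rw [Finset.mem_Icc] at hp
          rw [Phi_coeff g h1 b1 p hl1, Phi_coeff g h2 b2 (m - p) hl2]
          congr 1
          · apply Finset.sum_subset (Finset.Icc_subset_Icc le_rfl (by omega))
            intro i hi hi'
            simp only [Finset.mem_Icc, not_and, not_le] at hi hi'
            rw [hL1 i p (by omega), mul_zero]
          · apply Finset.sum_subset (Finset.Icc_subset_Icc le_rfl (by omega))
            intro j hj hj'
            simp only [Finset.mem_Icc, not_and, not_le] at hj hj'
            rw [hL1 j (m - p) (by omega), mul_zero]
      _ = ∑ p ∈ Finset.Icc b1 (m - b2), ∑ i ∈ Finset.Icc b1 (m - b2),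
            ∑ j ∈ Finset.Icc b2 (m - b1),
            (h1.coeff i * ((g⁻¹) ^ i).coeff p) * (h2.coeff j * ((g⁻¹) ^ j).coeff (m - p)) := by
          exact Finset.sum_congr rfl fun p _ => Finset.sum_mul_sum _ _ _ _
      _ = ∑ i ∈ Finset.Icc b1 (m - b2), ∑ j ∈ Finset.Icc b2 (m - b1),
            ∑ p ∈ Finset.Icc b1 (m - b2),
            (h1.coeff i * ((g⁻¹) ^ i).coeff p) * (h2.coeff j * ((g⁻¹) ^ j).coeff (m - p)) := by
          rw [Finset.sum_comm]
          exact Finset.sum_congr rfl fun i _ => Finset.sum_comm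
      _ = ∑ i ∈ Finset.Icc b1 (m - b2), ∑ j ∈ Finset.Icc b2 (m - b1),
            h1.coeff i * h2.coeff j *
            ∑ p ∈ Finset.Icc b1 (m - b2), ((g⁻¹) ^ i).coeff p * ((g⁻¹) ^ j).coeff (m - p) := by
          refine Finset.sum_congr rfl fun i _ => Finset.sum_congr rfl fun j _ => ?_
          rw [Finset.mul_sum]
          exact Finset.sum_congr rfl fun p _ => by ring
      _ = ∑ i ∈ Finset.Icc b1 (m - b2), ∑ j ∈ Finset.Icc b2 (m - b1),
            h1.coeff i * h2.coeff j * ((g⁻¹) ^ (i + j)).coeff m := by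
          refine Finset.sum_congr rfl fun i hi => Finset.sum_congr rfl fun j hj => ?_
          rw [Finset.mem_Icc] at hi hj
          congr 1
          have hmc : ((g⁻¹ : LaurentSeries ℂ) ^ i * (g⁻¹) ^ j).coeff m
              = ∑ p ∈ Finset.Icc i (m - j), ((g⁻¹) ^ i).coeff p * ((g⁻¹) ^ j).coeff (m - p) :=
            mul_coeff_Icc _ _ i j m (fun n hn => hL1 i n hn) (fun n hn => hL1 j n hn)
          rw [zpow_add₀ hune, hmc]
          symm
          apply Finset.sum_subset (Finset.Icc_subset_Icc (by omega) (by omega))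
          intro p hp hp'
          simp only [Finset.mem_Icc, not_and, not_le] at hp hp'
          by_cases hc : p < i
          · rw [hL1 i p hc, zero_mul]
          · rw [hL1 j (m - p) (by omega), mul_zero]
  rw [hLHS, hRHS]

/-- The substitution `T ↦ g⁻¹` as an algebra homomorphism. -/
noncomputable def PhiHom (g : LaurentSeries ℂ) (hgne : g ≠ 0)
    (hL1 : ∀ n m : ℤ, m < n → ((g⁻¹) ^ n).coeff m = 0) :
    LaurentSeries ℂ →ₐ[ℂ] LaurentSeries ℂ where
  toFun := Phi g
  map_one' := Phi_one g
  map_mul' := Phi_mul g hgne hL1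
  map_zero' := Phi_zero g
  map_add' := Phi_add g
  commutes' := fun c => by
    have h : (algebraMap ℂ (LaurentSeries ℂ)) c = HahnSeries.single (0 : ℤ) c := by
      rw [HahnSeries.algebraMap_apply', PowerSeries.algebraMap_apply, Algebra.algebraMap_self,
        RingHom.id_apply, HahnSeries.ofPowerSeries_C, HahnSeries.C_apply]
    rw [h]
    exact Phi_single0 g c

end InverseCompAux

open InverseCompAux in
/-- if `f, g ∈ z + (1/z)ℂ[[1/z]]` satisfy `f ∘ g = z` and `f` is
algebraic over `ℂ(z)`, then `g` is algebraic over `ℂ(z)`. -/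
theorem inverse_composition_algebraic (f g : LaurentSeries ℂ)
    (hf1 : f.coeff (-1) = 1) (hf0 : ∀ n : ℤ, n ≤ 0 → n ≠ -1 → f.coeff n = 0)
    (hg1 : g.coeff (-1) = 1) (hg0 : ∀ n : ℤ, n ≤ 0 → n ≠ -1 → g.coeff n = 0)
    (hcomp : compL f g = zL) (halg : IsAlgL f) : IsAlgL g := by
  obtain ⟨P, hP0, hPf⟩ := halg
  have hgne : g ≠ 0 := by
    intro h
    rw [h, HahnSeries.coeff_zero] at hg1
    exact zero_ne_one hg1
  have hord_g : g.order = -1 := by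
    apply le_antisymm
    · exact HahnSeries.order_le_of_coeff_ne_zero (by rw [hg1]; exact one_ne_zero)
    · by_contra hc
      push_neg at hc
      exact (mt HahnSeries.coeff_order_eq_zero.mp hgne) (hg0 g.order (by omega) (by omega))
  have hordpow : ∀ k : ℕ, (g ^ k).order = -(k : ℤ) := by
    intro k
    induction k with
    | zero => simpa using HahnSeries.order_one
    | succ n ih =>
      rw [pow_succ, HahnSeries.order_mul (pow_ne_zero n hgne) hgne, ih, hord_g]
      push_cast
      ring
  have hzpow : ∀ n : ℤ, ((g⁻¹ : LaurentSeries ℂ) ^ n).order = n := by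
    intro n
    cases n with
    | ofNat k =>
      rw [Int.ofNat_eq_coe, zpow_natCast, inv_pow]
      have h1 : (g ^ k) ≠ 0 := pow_ne_zero _ hgne
      have h3 := HahnSeries.order_mul h1 (inv_ne_zero h1)
      rw [mul_inv_cancel₀ h1, HahnSeries.order_one, hordpow k] at h3
      omega
    | negSucc k =>
      rw [zpow_negSucc, inv_pow, inv_inv, hordpow (k + 1), Int.negSucc_eq]
      push_cast
      ring
  have hL1 : ∀ n m : ℤ, m < n → ((g⁻¹ : LaurentSeries ℂ) ^ n).coeff m = 0 := by
    intro n m hmn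
    exact HahnSeries.coeff_eq_zero_of_lt_order (by rw [hzpow]; exact hmn)
  -- the homomorphism
  set Φ := PhiHom g hgne hL1 with hΦdef
  have hflow : ∀ n : ℤ, n < -1 → f.coeff n = 0 := fun n hn => hf0 n (by omega) (by omega)
  have hΦzL : Phi g zL = g := by
    ext m
    have hzlow : ∀ n : ℤ, n < -1 → zL.coeff n = 0 := fun n hn =>
      HahnSeries.coeff_single_of_ne (by omega)
    rw [Phi_coeff g zL (-1) m hzlow]
    by_cases hm : -1 ≤ m
    · rw [Finset.sum_eq_single (-1)
        (fun n _ hne => by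
          rw [show zL.coeff n = 0 from HahnSeries.coeff_single_of_ne hne, zero_mul])
        (fun h => absurd (Finset.mem_Icc.mpr ⟨le_rfl, hm⟩) h)]
      rw [show zL.coeff (-1) = 1 from HahnSeries.coeff_single_same _ _, one_mul,
        zpow_neg_one, inv_inv]
    · rw [Finset.Icc_eq_empty (by omega), Finset.sum_empty]
      exact (hg0 m (by omega) (by omega)).symm
  have hΦf : Phi g f = zL := by
    rw [← hcomp]
    ext m
    rw [Phi_coeff g f (-1) m hflow]
    rfl
  have hnat : Φ (MvPolynomial.aeval ![zL, f] P)
      = MvPolynomial.aeval (fun i => Φ (![zL, f] i)) P :=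
    MvPolynomial.comp_aeval_apply (f := ![zL, f]) Φ P
  rw [hPf, map_zero] at hnat
  have hvec : (fun i => Φ (![zL, f] i)) = ![g, zL] := by
    funext i
    fin_cases i
    · show Φ zL = g
      exact hΦzL
    · show Φ f = zL
      exact hΦf
  rw [hvec] at hnat
  refine ⟨MvPolynomial.rename (Equiv.swap 0 1) P, fun hQ => hP0 ?_, ?_⟩
  · exact (MvPolynomial.rename_injective _ (Equiv.swap (0 : Fin 2) 1).injective)
      (hQ.trans (map_zero _).symm)
  · rw [MvPolynomial.aeval_rename]
    have hsw : (![zL, g] ∘ (Equiv.swap (0 : Fin 2) 1)) = ![g, zL] := by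
      funext i
      fin_cases i <;> simp [Equiv.swap_apply_left, Equiv.swap_apply_right]
    rw [hsw]
    exact hnat.symm
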